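/- Let (X, μ, T) be an invertible measure-preserving system with probability measure μ and A ⊆ X measurable with μ(A) > 0. For every L ≥ 1 there exists a positive integer n, depending only on L and μ(A), such that for every nonzero integer b there exists m ≤ n with {mb, 2mb, …, Lmb} ⊆ R(A), where R(A) = {j ∈ ℤ : μ(A ∩ T^j A) > 0}. -/

import Mathlib

open MeasureTheory ENNReal

private lemma zpow_mp {X : Type*} [MeasurableSpace X] (μ : Measure X)
    (T : Equiv.Perm X) (hT : Measurable T) (hT' : Measurable T.symm)
    (hTμ : MeasurePreserving T μ μ) (j : ℤ) :
    MeasurePreserving (⇑(T ^ j)) μ μ := by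
  have hsymm : MeasurePreserving (⇑T.symm) μ μ := by
    refine ⟨hT', ?_⟩
    have h1 : Measure.map (⇑T.symm) (Measure.map (⇑T) μ) = μ := by
      rw [Measure.map_map hT' hT]
      have : ⇑T.symm ∘ ⇑T = id := funext fun x => T.symm_apply_apply x
      rw [this, Measure.map_id]
    rwa [hTμ.map_eq] at h1
  induction j using Int.induction_on with
  | zero => simpa using MeasurePreserving.id μ
  | succ n ih =>
      have h : T ^ ((n : ℤ) + 1) = T ^ (n : ℤ) * T := by
        rw [zpow_add_one]
      rw [h, Equiv.Perm.coe_mul]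
      exact ih.comp hTμ
  | pred n ih =>
      have h : T ^ (-(n : ℤ) - 1) = T ^ (-(n : ℤ)) * T⁻¹ := by
        rw [zpow_sub_one]
      rw [h, Equiv.Perm.coe_mul, Equiv.Perm.inv_def]
      exact ih.comp hsymm

private lemma img_comp {X : Type*} (T : Equiv.Perm X) (a c : ℤ) (s : Set X) :
    ⇑(T ^ a) '' (⇑(T ^ c) '' s) = ⇑(T ^ (a + c)) '' s := by
  rw [← Set.image_comp, ← Equiv.Perm.coe_mul, ← zpow_add]

private lemma img_eq_preimage {X : Type*} (T : Equiv.Perm X) (j : ℤ) (s : Set X) :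
    ⇑(T ^ j) '' s = ⇑(T ^ (-j)) ⁻¹' s := by
  rw [Equiv.image_eq_preimage_symm, zpow_neg, ← Equiv.Perm.inv_def]

/-- Uniform multiple recurrence: there is `n`, depending only on `L` and `μ(A)`,
such that for every nonzero `b` some `m ≤ n` has `{mb, 2mb, …, Lmb} ⊆ R(A)`. -/
theorem uniform_multiple_recurrence
    {X : Type*} [MeasurableSpace X] (μ : Measure X) [IsProbabilityMeasure μ]
    (T : Equiv.Perm X) (hT : Measurable T) (hT' : Measurable T.symm)
    (hTμ : MeasurePreserving T μ μ)
    (A : Set X) (hA : MeasurableSet A) (hpos : 0 < μ A)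
    (L : ℕ) (hL : 1 ≤ L) :
    ∃ n : ℕ, 0 < n ∧ n = Nat.floor (1 / (μ A).toReal ^ L) + 1 ∧
      ∀ b : ℤ, b ≠ 0 →
        ∃ m : ℕ, 1 ≤ m ∧ m ≤ n ∧
          ∀ i : ℕ, 1 ≤ i → i ≤ L →
            0 < μ (A ∩ ⇑(T ^ ((i : ℤ) * (m : ℤ) * b)) '' A) := by
  classical
  have hmp : ∀ j : ℤ, MeasurePreserving (⇑(T ^ j)) μ μ := zpow_mp μ T hT hT' hTμ
  have hms : ∀ (j : ℤ) (s : Set X), MeasurableSet s → MeasurableSet (⇑(T ^ j) '' s) := by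
    intro j s hs
    rw [img_eq_preimage]
    exact (hmp (-j)).measurable hs
  have himg : ∀ (j : ℤ) (s : Set X), MeasurableSet s → μ (⇑(T ^ j) '' s) = μ s := by
    intro j s hs
    rw [img_eq_preimage]
    exact (hmp (-j)).measure_preimage hs.nullMeasurableSet
  set n := Nat.floor (1 / (μ A).toReal ^ L) + 1 with hn
  refine ⟨n, Nat.succ_pos _, rfl, ?_⟩
  intro b hb
  by_contra hcon
  push_neg at hcon
  -- product measure setup
  set ν : Measure (Fin L → X) := Measure.pi fun _ => μ with hν
  haveI : IsProbabilityMeasure ν := by rw [hν]; infer_instance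
  set C : ℕ → Set (Fin L → X) :=
    fun m => Set.pi Set.univ fun i : Fin L =>
      ⇑(T ^ ((((i : ℕ) : ℤ) + 1) * (m : ℤ) * b)) '' A with hC
  have hCms : ∀ m, MeasurableSet (C m) := fun m =>
    MeasurableSet.univ_pi fun i => hms _ A hA
  have hCm : ∀ m, ν (C m) = (μ A) ^ L := by
    intro m
    rw [hC, hν, Measure.pi_pi]
    rw [Finset.prod_congr rfl (fun i _ => himg _ A hA), Finset.prod_const,
      Finset.card_univ, Fintype.card_fin]
  -- key: pairwise a.e. disjointness
  have key : ∀ m1 m2 : ℕ, m1 < m2 → m2 ≤ n → ν (C m1 ∩ C m2) = 0 := by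
    intro m1 m2 hlt hle
    set m := m2 - m1 with hm
    obtain ⟨i, hi1, hiL, hzero⟩ := hcon m (by omega) (by omega)
    have hzero' : μ (A ∩ ⇑(T ^ ((i : ℤ) * (m : ℤ) * b)) '' A) = 0 :=
      le_antisymm hzero zero_le
    have hCI : C m1 ∩ C m2 = Set.pi Set.univ (fun j : Fin L =>
        (⇑(T ^ ((((j : ℕ) : ℤ) + 1) * (m1 : ℤ) * b)) '' A) ∩
        (⇑(T ^ ((((j : ℕ) : ℤ) + 1) * (m2 : ℤ) * b)) '' A)) := by
      rw [hC, ← Set.pi_inter_distrib]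
    rw [hCI, hν, Measure.pi_pi]
    set j0 : Fin L := ⟨i - 1, by omega⟩ with hj0
    apply Finset.prod_eq_zero (Finset.mem_univ j0)
    have hcast : (((j0 : ℕ) : ℤ) + 1) = (i : ℤ) := by
      have : (j0 : ℕ) = i - 1 := rfl
      rw [this]; omega
    rw [hcast]
    set c1 : ℤ := (i : ℤ) * (m1 : ℤ) * b with hc1
    set c2 : ℤ := (i : ℤ) * (m2 : ℤ) * b with hc2
    have e2 : -c1 + c2 = (i : ℤ) * (m : ℤ) * b := by
      rw [hc1, hc2, hm]
      push_cast [Nat.cast_sub hlt.le]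
      ring
    have key_eq : μ ((⇑(T ^ c1) '' A) ∩ (⇑(T ^ c2) '' A)) =
        μ (A ∩ ⇑(T ^ ((i : ℤ) * (m : ℤ) * b)) '' A) := by
      rw [← himg (-c1) _ ((hms c1 A hA).inter (hms c2 A hA)),
        Set.image_inter (Equiv.injective _), img_comp, img_comp, neg_add_cancel,
        e2, zpow_zero, Equiv.Perm.coe_one, Set.image_id]
    rw [key_eq]
    exact hzero'
  -- counting contradiction
  have hpair : Set.Pairwise (↑(Finset.range (n + 1))) (Function.onFun (AEDisjoint ν) C) := by
    intro x hx y hy hxy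
    simp only [Finset.coe_range, Set.mem_Iio] at hx hy
    rcases hxy.lt_or_gt with h | h
    · exact key x y h (by omega)
    · have : ν (C y ∩ C x) = 0 := key y x h (by omega)
      show ν (C x ∩ C y) = 0
      rwa [Set.inter_comm]
  have hsum : ν (⋃ m ∈ Finset.range (n + 1), C m)
      = ∑ m ∈ Finset.range (n + 1), ν (C m) :=
    measure_biUnion_finset₀ hpair fun m _ => (hCms m).nullMeasurableSet
  have hineq : ((n + 1 : ℕ) : ℝ≥0∞) * (μ A) ^ L ≤ 1 := by
    have h1 : ν (⋃ m ∈ Finset.range (n + 1), C m) ≤ 1 := prob_le_one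
    rw [hsum] at h1
    rw [Finset.sum_congr rfl (fun m _ => hCm m), Finset.sum_const,
      Finset.card_range, nsmul_eq_mul] at h1
    exact h1
  -- real arithmetic
  set r := (μ A).toReal with hr
  have hr0 : 0 < r := ENNReal.toReal_pos hpos.ne' (measure_ne_top μ A)
  have hrL : 0 < r ^ L := pow_pos hr0 L
  have hfl : (1 / r ^ L : ℝ) < (n : ℝ) := by
    have h := Nat.lt_floor_add_one (1 / r ^ L)
    rw [hn]
    push_cast
    linarith
  have hgt : (1 : ℝ) < ((n : ℝ) + 1) * r ^ L := by
    have h2 : 1 / r ^ L < (n : ℝ) + 1 := by linarith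
    calc (1 : ℝ) = (1 / r ^ L) * r ^ L := by field_simp
    _ < ((n : ℝ) + 1) * r ^ L := mul_lt_mul_of_pos_right h2 hrL
  have hto := ENNReal.toReal_mono ENNReal.one_ne_top hineq
  rw [ENNReal.toReal_mul, ENNReal.toReal_pow, ENNReal.toReal_one,
    ENNReal.toReal_natCast] at hto
  rw [← hr] at hto
  rw [hn] at hgt
  push_cast at hgt hto
  rw [hn] at hto; push_cast at hto
  linarith
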